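/- arXiv:1606.02027 — 7 statements merged into one kernel-verified Lean document; each statement's English description precedes it below -/
import Mathlib

section
/- Let H be a complex Hilbert space, let Φ = (φ_1, …, φ_N) be a frame for H with frame bounds 0 < A ≤ B, and let μ be a real number with 0 < μ < √A. If Ψ = (ψ_1, …, ψ_N) is a μ-perturbation of Φ, then Ψ is also a frame for H, with frame bounds A·(1 − μ/√A)² and B·(1 + μ/√B)²; that is, for all x ∈ H, A·(1 − μ/√A)²·‖x‖² ≤ Σ_{i=1}^N |⟨x, ψ_i⟩|² ≤ B·(1 + μ/√B)²·‖x‖². -/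
set_option maxHeartbeats 1000000

open scoped ComplexInnerProductSpace

/-- If `Φ` is a frame for a complex Hilbert space `H` with frame
bounds `0 < A ≤ B`, `0 < μ < √A`, and `Ψ` is a `μ`-perturbation of `Φ`, then `Ψ` is
a frame for `H` with bounds `A(1 - μ/√A)²` and `B(1 + μ/√B)²`. -/
theorem perturbation_of_frame_is_frame
    {H : Type*} [NormedAddCommGroup H] [InnerProductSpace ℂ H] [CompleteSpace H]
    {N : ℕ} (φ ψ : Fin N → H) (A B μ : ℝ) (hA : 0 < A) (hAB : A ≤ B)
    (hframe : ∀ x : H, A * ‖x‖ ^ 2 ≤ ∑ i, ‖⟪x, φ i⟫‖ ^ 2 ∧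
      ∑ i, ‖⟪x, φ i⟫‖ ^ 2 ≤ B * ‖x‖ ^ 2)
    (hμ : 0 < μ) (hμA : μ < Real.sqrt A)
    (hpert : ∀ c : Fin N → ℂ,
      ‖∑ i, c i • (φ i - ψ i)‖ ≤ μ * Real.sqrt (∑ i, ‖c i‖ ^ 2)) :
    ∀ x : H, A * (1 - μ / Real.sqrt A) ^ 2 * ‖x‖ ^ 2 ≤ ∑ i, ‖⟪x, ψ i⟫‖ ^ 2 ∧
      ∑ i, ‖⟪x, ψ i⟫‖ ^ 2 ≤ B * (1 + μ / Real.sqrt B) ^ 2 * ‖x‖ ^ 2 := by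
  intro x
  have hB : (0:ℝ) < B := lt_of_lt_of_le hA hAB
  set d : Fin N → H := fun i => φ i - ψ i with hd
  -- key: sqrt (∑ ‖⟪x, d i⟫‖²) ≤ μ * ‖x‖
  set S : ℝ := ∑ i, ‖⟪x, d i⟫‖ ^ 2 with hS
  have hS0 : 0 ≤ S := Finset.sum_nonneg fun i _ => sq_nonneg _
  have hkey : Real.sqrt S ≤ μ * ‖x‖ := by
    set c : Fin N → ℂ := fun i => starRingEnd ℂ ⟪x, d i⟫ with hc
    have hcnorm : (∑ i, ‖c i‖ ^ 2) = S := by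
      simp only [hc, hS, RCLike.norm_conj]
    have hinner : (⟪x, ∑ i, c i • d i⟫ : ℂ) = (S : ℝ) := by
      rw [inner_sum, hS]
      push_cast
      apply Finset.sum_congr rfl
      intro i _
      rw [inner_smul_right, hc]
      rw [mul_comm, Complex.mul_conj']
    have h1 : S ≤ ‖x‖ * (μ * Real.sqrt S) := by
      calc S = ‖(⟪x, ∑ i, c i • d i⟫ : ℂ)‖ := by rw [hinner]; simp [abs_of_nonneg hS0]
        _ ≤ ‖x‖ * ‖∑ i, c i • d i‖ := norm_inner_le_norm _ _
        _ ≤ ‖x‖ * (μ * Real.sqrt S) := by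
            apply mul_le_mul_of_nonneg_left _ (norm_nonneg x)
            rw [← hcnorm]; exact hpert c
    rcases eq_or_lt_of_le (Real.sqrt_nonneg S) with h | h
    · rw [← h]; positivity
    · have := Real.sq_sqrt hS0
      nlinarith [Real.sqrt_nonneg S]
  -- Euclidean vectors
  set u : EuclideanSpace ℂ (Fin N) := WithLp.toLp 2 (fun i => ⟪x, φ i⟫) with hu
  set v : EuclideanSpace ℂ (Fin N) := WithLp.toLp 2 (fun i => ⟪x, ψ i⟫) with hv
  have hdiff : ‖u - v‖ = Real.sqrt S := by
    rw [EuclideanSpace.norm_eq]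
    congr 1
    apply Finset.sum_congr rfl
    intro i _
    simp [hu, hv, hd, inner_sub_right]
  have hun : ‖u‖ ^ 2 = ∑ i, ‖⟪x, φ i⟫‖ ^ 2 := by
    rw [EuclideanSpace.norm_eq, Real.sq_sqrt (Finset.sum_nonneg fun i _ => sq_nonneg _)]
  have hvn : ‖v‖ ^ 2 = ∑ i, ‖⟪x, ψ i⟫‖ ^ 2 := by
    rw [EuclideanSpace.norm_eq, Real.sq_sqrt (Finset.sum_nonneg fun i _ => sq_nonneg _)]
  have hsA : Real.sqrt A ^ 2 = A := Real.sq_sqrt hA.le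
  have hsB : Real.sqrt B ^ 2 = B := Real.sq_sqrt hB.le
  have hsA0 : 0 < Real.sqrt A := Real.sqrt_pos.2 hA
  have hsB0 : 0 < Real.sqrt B := Real.sqrt_pos.2 hB
  have hlowu : Real.sqrt A * ‖x‖ ≤ ‖u‖ := by
    have h := (hframe x).1
    rw [← hun] at h
    nlinarith [norm_nonneg u, norm_nonneg x, mul_nonneg hsA0.le (norm_nonneg x)]
  have hupu : ‖u‖ ≤ Real.sqrt B * ‖x‖ := by
    have h := (hframe x).2
    rw [← hun] at h
    nlinarith [norm_nonneg u, norm_nonneg x, mul_nonneg hsB0.le (norm_nonneg x)]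
  have htri1 : ‖u‖ - ‖u - v‖ ≤ ‖v‖ := by
    have := norm_sub_norm_le u v
    linarith [abs_le.1 (abs_norm_sub_norm_le u v) |>.1]
  have htri2 : ‖v‖ ≤ ‖u‖ + ‖u - v‖ := by
    have : v = u - (u - v) := by abel
    calc ‖v‖ = ‖u - (u - v)‖ := by rw [← this]
      _ ≤ ‖u‖ + ‖u - v‖ := norm_sub_le _ _
  rw [hdiff] at htri1 htri2
  constructor
  · rw [← hvn]
    have h1 : (Real.sqrt A - μ) * ‖x‖ ≤ ‖v‖ := by
      calc (Real.sqrt A - μ) * ‖x‖ = Real.sqrt A * ‖x‖ - μ * ‖x‖ := by ring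
        _ ≤ ‖u‖ - Real.sqrt S := by linarith
        _ ≤ ‖v‖ := htri1
    have heq : A * (1 - μ / Real.sqrt A) ^ 2 = (Real.sqrt A - μ) ^ 2 := by
      field_simp
      rw [hsA]
    rw [heq]
    have h0 : 0 ≤ (Real.sqrt A - μ) * ‖x‖ :=
      mul_nonneg (by linarith) (norm_nonneg x)
    nlinarith [norm_nonneg v]
  · rw [← hvn]
    have h1 : ‖v‖ ≤ (Real.sqrt B + μ) * ‖x‖ := by
      calc ‖v‖ ≤ ‖u‖ + Real.sqrt S := htri2
        _ ≤ Real.sqrt B * ‖x‖ + μ * ‖x‖ := by linarith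
        _ = (Real.sqrt B + μ) * ‖x‖ := by ring
    have heq : B * (1 + μ / Real.sqrt B) ^ 2 = (Real.sqrt B + μ) ^ 2 := by
      field_simp
      rw [hsB]
    rw [heq]
    nlinarith [norm_nonneg v, norm_nonneg x]
end

section
/- Let H be a finite-dimensional complex Hilbert space and let W_1, …, W_N be closed subspaces of H forming a fusion frame for H (with all weights equal to 1) with bounds 0 < A ≤ B. Let μ > 0 satisfy √A − μ√N > 0, and let V_1, …, V_N be closed subspaces of H such that ‖P_{W_i}(x) − P_{V_i}(x)‖ ≤ μ‖x‖ for every x ∈ H and every i = 1, …, N (where P_U denotes the orthogonal projection onto U). Then V_1, …, V_N is a fusion frame for H with bounds (√A − μ√N)² and (√B + μ√N)²; that is, for all x ∈ H, (√A − μ√N)²·‖x‖² ≤ Σ_{i=1}^N ‖P_{V_i}(x)‖² ≤ (√B + μ√N)²·‖x‖². -/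
private lemma le_of_sq_le_sq' {a b : ℝ} (_ha : 0 ≤ a) (hb : 0 ≤ b) (h : a ^ 2 ≤ b ^ 2) :
    a ≤ b := by nlinarith


/-- If `W₁, …, W_N` is a fusion frame (all weights 1) for a
finite-dimensional complex Hilbert space `H` with bounds `0 < A ≤ B`,
`μ > 0` satisfies `√A - μ√N > 0`, and `V₁, …, V_N` are closed subspaces with
`‖P_{Wᵢ} x - P_{Vᵢ} x‖ ≤ μ‖x‖` for all `x` and `i`, then `V₁, …, V_N` is a
fusion frame with bounds `(√A - μ√N)²` and `(√B + μ√N)²`. -/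
theorem perturbation_of_fusion_frame_is_fusion_frame
    {H : Type*} [NormedAddCommGroup H] [InnerProductSpace ℂ H] [FiniteDimensional ℂ H]
    {N : ℕ} (W V : Fin N → Submodule ℂ H) (A B μ : ℝ) (hA : 0 < A) (hAB : A ≤ B)
    (hframe : ∀ x : H,
      A * ‖x‖ ^ 2 ≤ ∑ i, ‖(Submodule.orthogonalProjection (W i) x : H)‖ ^ 2 ∧
        ∑ i, ‖(Submodule.orthogonalProjection (W i) x : H)‖ ^ 2 ≤ B * ‖x‖ ^ 2)
    (hμ : 0 < μ) (hμN : 0 < Real.sqrt A - μ * Real.sqrt N)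
    (hpert : ∀ i, ∀ x : H,
      ‖(Submodule.orthogonalProjection (W i) x : H) - (Submodule.orthogonalProjection (V i) x : H)‖ ≤ μ * ‖x‖) :
    ∀ x : H,
      (Real.sqrt A - μ * Real.sqrt N) ^ 2 * ‖x‖ ^ 2 ≤
          ∑ i, ‖(Submodule.orthogonalProjection (V i) x : H)‖ ^ 2 ∧
        ∑ i, ‖(Submodule.orthogonalProjection (V i) x : H)‖ ^ 2 ≤
          (Real.sqrt B + μ * Real.sqrt N) ^ 2 * ‖x‖ ^ 2 := by
  intro x
  set F : PiLp 2 (fun _ : Fin N => H) := WithLp.toLp 2 (fun i => (Submodule.orthogonalProjection (W i) x : H)) with hF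
  set G : PiLp 2 (fun _ : Fin N => H) := WithLp.toLp 2 (fun i => (Submodule.orthogonalProjection (V i) x : H)) with hG
  have hxnn : (0:ℝ) ≤ ‖x‖ := norm_nonneg x
  have hFsq : ‖F‖ ^ 2 = ∑ i, ‖(Submodule.orthogonalProjection (W i) x : H)‖ ^ 2 := by
    rw [PiLp.norm_sq_eq_of_L2]
  have hGsq : ‖G‖ ^ 2 = ∑ i, ‖(Submodule.orthogonalProjection (V i) x : H)‖ ^ 2 := by
    rw [PiLp.norm_sq_eq_of_L2]
  have hD : ‖F - G‖ ≤ μ * Real.sqrt N * ‖x‖ := by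
    have h1 : ‖F - G‖ ^ 2 ≤ (N : ℝ) * (μ * ‖x‖) ^ 2 := by
      rw [PiLp.norm_sq_eq_of_L2]
      calc ∑ i, ‖(F - G) i‖ ^ 2 ≤ ∑ _i : Fin N, (μ * ‖x‖) ^ 2 := by
            refine Finset.sum_le_sum fun i _ => ?_
            have := hpert i x
            have h0 : ‖(F - G) i‖ = ‖(Submodule.orthogonalProjection (W i) x : H) -
                (Submodule.orthogonalProjection (V i) x : H)‖ := rfl
            rw [h0]
            exact pow_le_pow_left₀ (norm_nonneg _) this 2
        _ = (N : ℝ) * (μ * ‖x‖) ^ 2 := by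
            rw [Finset.sum_const, Finset.card_univ, Fintype.card_fin, nsmul_eq_mul]
    have h2 : ‖F - G‖ ^ 2 ≤ (μ * Real.sqrt N * ‖x‖) ^ 2 := by
      calc ‖F - G‖ ^ 2 ≤ (N : ℝ) * (μ * ‖x‖) ^ 2 := h1
        _ = (μ * Real.sqrt N * ‖x‖) ^ 2 := by
            rw [mul_pow, mul_pow, mul_pow, Real.sq_sqrt (Nat.cast_nonneg N)]; ring
    exact le_of_sq_le_sq' (norm_nonneg _) (by positivity) h2
  have hFlow : Real.sqrt A * ‖x‖ ≤ ‖F‖ := by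
    have h : (Real.sqrt A * ‖x‖) ^ 2 ≤ ‖F‖ ^ 2 := by
      rw [mul_pow, Real.sq_sqrt hA.le, hFsq]; exact (hframe x).1
    exact le_of_sq_le_sq' (by positivity) (norm_nonneg F) h
  have hFup : ‖F‖ ≤ Real.sqrt B * ‖x‖ := by
    have h : ‖F‖ ^ 2 ≤ (Real.sqrt B * ‖x‖) ^ 2 := by
      rw [mul_pow, Real.sq_sqrt (hA.le.trans hAB), hFsq]; exact (hframe x).2
    exact le_of_sq_le_sq' (norm_nonneg F) (by positivity) h
  have hGlow : (Real.sqrt A - μ * Real.sqrt N) * ‖x‖ ≤ ‖G‖ := by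
    have h1 : ‖F‖ - ‖F - G‖ ≤ ‖G‖ := by
      have := norm_sub_norm_le F G
      have h2 := norm_sub_le F (F - G)
      simp only [sub_sub_cancel] at h2
      linarith
    have : Real.sqrt A * ‖x‖ - μ * Real.sqrt N * ‖x‖ ≤ ‖G‖ := by linarith
    linarith [this, (by ring : (Real.sqrt A - μ * Real.sqrt N) * ‖x‖ =
      Real.sqrt A * ‖x‖ - μ * Real.sqrt N * ‖x‖)]
  have hGup : ‖G‖ ≤ (Real.sqrt B + μ * Real.sqrt N) * ‖x‖ := by
    have h1 : ‖G‖ ≤ ‖F‖ + ‖F - G‖ := by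
      have h2 := norm_sub_le F (F - G)
      simp only [sub_sub_cancel] at h2
      exact h2.trans_eq rfl
    nlinarith
  constructor
  · have h : ((Real.sqrt A - μ * Real.sqrt N) * ‖x‖) ^ 2 ≤ ‖G‖ ^ 2 :=
      pow_le_pow_left₀ (by positivity) hGlow 2
    rw [hGsq] at h
    calc (Real.sqrt A - μ * Real.sqrt N) ^ 2 * ‖x‖ ^ 2
        = ((Real.sqrt A - μ * Real.sqrt N) * ‖x‖) ^ 2 := by ring
      _ ≤ _ := h
  · have h : ‖G‖ ^ 2 ≤ ((Real.sqrt B + μ * Real.sqrt N) * ‖x‖) ^ 2 :=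
      pow_le_pow_left₀ (norm_nonneg G) hGup 2
    rw [hGsq] at h
    calc ∑ i, ‖(Submodule.orthogonalProjection (V i) x : H)‖ ^ 2
        ≤ ((Real.sqrt B + μ * Real.sqrt N) * ‖x‖) ^ 2 := h
      _ = (Real.sqrt B + μ * Real.sqrt N) ^ 2 * ‖x‖ ^ 2 := by ring
end

section
/- Let H be a finite-dimensional complex Hilbert space with dim H ≥ 1, let Φ = (φ_1, …, φ_N) be a frame for H consisting of unit vectors (‖φ_i‖ = 1 for all i), and let Ψ = (ψ_1, …, ψ_N) be a μ-perturbation of Φ with ‖ψ_i‖ = 1 for all i and 0 < μ < √(R_Φ^−). Then Ψ is a frame for H and its lower redundancy satisfies R_Ψ^− ≥ R_Φ^−·(1 − μ/√(R_Φ^−))² = (√(R_Φ^−) − μ)². -/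
open scoped ComplexInnerProductSpace

-- key: for unit x, √RΦ(x) - μ ≤ √RΨ(x)
lemma pert_key
    {H : Type*} [NormedAddCommGroup H] [InnerProductSpace ℂ H]
    {N : ℕ} (φ ψ : Fin N → H) (μ : ℝ) (hμ : 0 < μ)
    (hpert : ∀ c : Fin N → ℂ,
      ‖∑ i, c i • (φ i - ψ i)‖ ≤ μ * Real.sqrt (∑ i, ‖c i‖ ^ 2))
    (x : H) (hx : ‖x‖ = 1) :
    Real.sqrt (∑ i, ‖⟪x, φ i⟫‖ ^ 2) - μ ≤ Real.sqrt (∑ i, ‖⟪x, ψ i⟫‖ ^ 2) := by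
  set d : Fin N → ℂ := fun i => ⟪x, φ i - ψ i⟫ with hd_def
  set S : ℝ := ∑ i, ‖d i‖ ^ 2 with hS_def
  have hS0 : 0 ≤ S := Finset.sum_nonneg fun i _ => by positivity
  have hdle : Real.sqrt S ≤ μ := by
    set v : H := ∑ i, (starRingEnd ℂ (d i)) • (φ i - ψ i) with hv_def
    have hv : ⟪x, v⟫ = (S : ℂ) := by
      rw [hv_def, inner_sum]
      push_cast [hS_def]
      refine Finset.sum_congr rfl fun i _ => ?_
      rw [inner_smul_right]
      rw [mul_comm, Complex.mul_conj']
    have h1 : S ≤ μ * Real.sqrt S := by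
      have := norm_inner_le_norm (𝕜 := ℂ) x v
      have h2 : ‖v‖ ≤ μ * Real.sqrt S := by
        have := hpert fun i => starRingEnd ℂ (d i)
        simpa [hS_def] using this
      calc S = ‖⟪x, v⟫‖ := by rw [hv]; simp [abs_of_nonneg hS0]
        _ ≤ ‖x‖ * ‖v‖ := norm_inner_le_norm x v
        _ = ‖v‖ := by rw [hx, one_mul]
        _ ≤ μ * Real.sqrt S := h2
    rcases eq_or_lt_of_le (Real.sqrt_nonneg S) with h | h
    · rw [← h]; exact hμ.le
    · have : Real.sqrt S * Real.sqrt S ≤ μ * Real.sqrt S := by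
        rw [Real.mul_self_sqrt hS0]; exact h1
      exact le_of_mul_le_mul_right this h
  -- triangle inequality in ℓ²
  set u : EuclideanSpace ℂ (Fin N) := WithLp.toLp 2 (fun i => ⟪x, ψ i⟫) with hu_def
  set w : EuclideanSpace ℂ (Fin N) := WithLp.toLp 2 (fun i => d i) with hw_def
  have huw : Real.sqrt (∑ i, ‖⟪x, φ i⟫‖ ^ 2) = ‖u + w‖ := by
    rw [EuclideanSpace.norm_eq]
    congr 1
    refine Finset.sum_congr rfl fun i _ => ?_
    have : (u + w) i = ⟪x, φ i⟫ := by
      show u i + w i = _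
      simp only [hu_def, hw_def]
      show ⟪x, ψ i⟫ + ⟪x, φ i - ψ i⟫ = ⟪x, φ i⟫
      rw [inner_sub_right]; ring
    rw [this]
  have hub : ‖u‖ = Real.sqrt (∑ i, ‖⟪x, ψ i⟫‖ ^ 2) := by
    rw [EuclideanSpace.norm_eq]
  have hwb : ‖w‖ = Real.sqrt S := by
    rw [EuclideanSpace.norm_eq]
  have := norm_add_le u w
  rw [← huw, hub, hwb] at this
  linarith [hdle]

/-- If `Φ` is a unit-norm frame for a finite-dimensional complex
Hilbert space `H` (`dim H ≥ 1`) and `Ψ` is a unit-norm `μ`-perturbation of `Φ`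
with `0 < μ < √(R_Φ⁻)`, then `Ψ` is a frame for `H` and
`R_Ψ⁻ ≥ R_Φ⁻ (1 - μ/√(R_Φ⁻))² = (√(R_Φ⁻) - μ)²`. -/
theorem lower_redundancy_of_perturbed_frame
    {H : Type*} [NormedAddCommGroup H] [InnerProductSpace ℂ H] [FiniteDimensional ℂ H]
    (hdim : 1 ≤ Module.finrank ℂ H)
    {N : ℕ} (φ ψ : Fin N → H) (μ : ℝ)
    (hframe : ∃ A B : ℝ, 0 < A ∧ A ≤ B ∧ ∀ x : H,
      A * ‖x‖ ^ 2 ≤ ∑ i, ‖⟪x, φ i⟫‖ ^ 2 ∧ ∑ i, ‖⟪x, φ i⟫‖ ^ 2 ≤ B * ‖x‖ ^ 2)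
    (hφ : ∀ i, ‖φ i‖ = 1) (hψ : ∀ i, ‖ψ i‖ = 1)
    (hμ : 0 < μ)
    (hμR : μ < Real.sqrt (⨅ x : {x : H // ‖x‖ = 1}, ∑ i, ‖⟪(x : H), φ i⟫‖ ^ 2))
    (hpert : ∀ c : Fin N → ℂ,
      ‖∑ i, c i • (φ i - ψ i)‖ ≤ μ * Real.sqrt (∑ i, ‖c i‖ ^ 2)) :
    (∃ A B : ℝ, 0 < A ∧ A ≤ B ∧ ∀ x : H,
      A * ‖x‖ ^ 2 ≤ ∑ i, ‖⟪x, ψ i⟫‖ ^ 2 ∧ ∑ i, ‖⟪x, ψ i⟫‖ ^ 2 ≤ B * ‖x‖ ^ 2) ∧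
    (⨅ x : {x : H // ‖x‖ = 1}, ∑ i, ‖⟪(x : H), φ i⟫‖ ^ 2) *
        (1 - μ / Real.sqrt (⨅ x : {x : H // ‖x‖ = 1}, ∑ i, ‖⟪(x : H), φ i⟫‖ ^ 2)) ^ 2 ≤
      (⨅ x : {x : H // ‖x‖ = 1}, ∑ i, ‖⟪(x : H), ψ i⟫‖ ^ 2) ∧
    (⨅ x : {x : H // ‖x‖ = 1}, ∑ i, ‖⟪(x : H), φ i⟫‖ ^ 2) *
        (1 - μ / Real.sqrt (⨅ x : {x : H // ‖x‖ = 1}, ∑ i, ‖⟪(x : H), φ i⟫‖ ^ 2)) ^ 2 =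
      (Real.sqrt (⨅ x : {x : H // ‖x‖ = 1}, ∑ i, ‖⟪(x : H), φ i⟫‖ ^ 2) - μ) ^ 2 := by
  set R : ℝ := ⨅ x : {x : H // ‖x‖ = 1}, ∑ i, ‖⟪(x : H), φ i⟫‖ ^ 2 with hR_def
  have hsqrtR : 0 < Real.sqrt R := lt_trans hμ hμR
  have hR0 : 0 < R := Real.sqrt_pos.mp hsqrtR
  -- a unit vector exists
  have hnontriv : Nontrivial H := by
    have : 0 < Module.finrank ℂ H := hdim
    exact Module.nontrivial_of_finrank_pos this
  obtain ⟨z, hz⟩ := exists_ne (0 : H)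
  have hzn : ‖z‖ ≠ 0 := norm_ne_zero_iff.mpr hz
  have hunit : ‖(‖z‖⁻¹ • z)‖ = 1 := by
    rw [norm_smul, norm_inv, norm_norm, inv_mul_cancel₀ hzn]
  haveI : Nonempty {x : H // ‖x‖ = 1} := ⟨⟨_, hunit⟩⟩
  -- infimum property for φ
  have hbdd : ∀ (f : Fin N → H), BddBelow
      (Set.range fun x : {x : H // ‖x‖ = 1} => ∑ i, ‖⟪(x : H), f i⟫‖ ^ 2) := by
    intro f
    refine ⟨0, fun y hy => ?_⟩
    obtain ⟨x, rfl⟩ := hy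
    exact Finset.sum_nonneg fun i _ => by positivity
  -- for every unit x, (√R - μ)^2 ≤ ∑ ‖⟪x, ψ i⟫‖^2
  have hkey : ∀ x : H, ‖x‖ = 1 →
      (Real.sqrt R - μ) ^ 2 ≤ ∑ i, ‖⟪x, ψ i⟫‖ ^ 2 := by
    intro x hx
    have h1 : Real.sqrt R ≤ Real.sqrt (∑ i, ‖⟪x, φ i⟫‖ ^ 2) := by
      apply Real.sqrt_le_sqrt
      exact ciInf_le (hbdd φ) (⟨x, hx⟩ : {x : H // ‖x‖ = 1})
    have h2 := pert_key φ ψ μ hμ hpert x hx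
    have h3 : Real.sqrt R - μ ≤ Real.sqrt (∑ i, ‖⟪x, ψ i⟫‖ ^ 2) := by linarith
    have h4 : 0 ≤ Real.sqrt R - μ := by linarith [hμR.le]
    calc (Real.sqrt R - μ) ^ 2 ≤ (Real.sqrt (∑ i, ‖⟪x, ψ i⟫‖ ^ 2)) ^ 2 := by
          exact pow_le_pow_left₀ h4 h3 2
      _ = ∑ i, ‖⟪x, ψ i⟫‖ ^ 2 := Real.sq_sqrt (Finset.sum_nonneg fun i _ => by positivity)
  have hApos : 0 < (Real.sqrt R - μ) ^ 2 := by
    have : 0 < Real.sqrt R - μ := by linarith [hμR]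
    positivity
  refine ⟨⟨(Real.sqrt R - μ) ^ 2, (Real.sqrt R - μ) ^ 2 + N, hApos, le_add_of_nonneg_right (Nat.cast_nonneg N), ?_⟩, ?_, ?_⟩
  · intro x
    constructor
    · rcases eq_or_ne x 0 with rfl | hx0
      · simp
      · have hxn : ‖x‖ ≠ 0 := norm_ne_zero_iff.mpr hx0
        have hu : ‖(‖x‖⁻¹ • x)‖ = 1 := by
          rw [norm_smul, norm_inv, norm_norm, inv_mul_cancel₀ hxn]
        have := hkey _ hu
        have hscale : ∀ i, ‖⟪((‖x‖⁻¹ • x) : H), ψ i⟫‖ = ‖x‖⁻¹ * ‖⟪x, ψ i⟫‖ := by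
          intro i
          rw [RCLike.real_smul_eq_coe_smul (K := ℂ), inner_smul_left]
          simp [norm_mul, abs_of_nonneg (inv_nonneg.mpr (norm_nonneg x))]
        have hsum : ∑ i, ‖⟪((‖x‖⁻¹ • x) : H), ψ i⟫‖ ^ 2
            = (‖x‖⁻¹) ^ 2 * ∑ i, ‖⟪x, ψ i⟫‖ ^ 2 := by
          rw [Finset.mul_sum]
          refine Finset.sum_congr rfl fun i _ => ?_
          rw [hscale i, mul_pow]
        rw [hsum] at this
        have hxpos : (0:ℝ) < ‖x‖ ^ 2 := by positivity
        have h6 : (‖x‖⁻¹) ^ 2 * ‖x‖ ^ 2 = 1 := by field_simp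
        calc (Real.sqrt R - μ) ^ 2 * ‖x‖ ^ 2
            ≤ ((‖x‖⁻¹) ^ 2 * ∑ i, ‖⟪x, ψ i⟫‖ ^ 2) * ‖x‖ ^ 2 :=
              mul_le_mul_of_nonneg_right this hxpos.le
          _ = (∑ i, ‖⟪x, ψ i⟫‖ ^ 2) * ((‖x‖⁻¹) ^ 2 * ‖x‖ ^ 2) := by ring
          _ = ∑ i, ‖⟪x, ψ i⟫‖ ^ 2 := by rw [h6, mul_one]
    · have hCS : ∀ i, ‖⟪x, ψ i⟫‖ ^ 2 ≤ ‖x‖ ^ 2 := by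
        intro i
        have := norm_inner_le_norm (𝕜 := ℂ) x (ψ i)
        rw [hψ i, mul_one] at this
        exact pow_le_pow_left₀ (norm_nonneg _) this 2
      calc ∑ i, ‖⟪x, ψ i⟫‖ ^ 2 ≤ ∑ _i : Fin N, ‖x‖ ^ 2 :=
            Finset.sum_le_sum fun i _ => hCS i
        _ = (N : ℝ) * ‖x‖ ^ 2 := by simp [Finset.sum_const, mul_comm]
        _ ≤ ((Real.sqrt R - μ) ^ 2 + N) * ‖x‖ ^ 2 := by nlinarith [hApos, sq_nonneg ‖x‖]
  · -- infimum bound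
    have heq : R * (1 - μ / Real.sqrt R) ^ 2 = (Real.sqrt R - μ) ^ 2 := by
      have hs : Real.sqrt R ^ 2 = R := Real.sq_sqrt hR0.le
      field_simp
      rw [hs]
    rw [heq]
    exact le_ciInf fun x => hkey x x.2
  · have hs : Real.sqrt R ^ 2 = R := Real.sq_sqrt hR0.le
    field_simp
    rw [hs]
end

section
/- Let H be a finite-dimensional complex Hilbert space with dim H ≥ 1, let Φ = (φ_1, …, φ_N) be a frame for H consisting of unit vectors (‖φ_i‖ = 1 for all i), and let Ψ = (ψ_1, …, ψ_N) be a μ-perturbation of Φ with ‖ψ_i‖ = 1 for all i and μ > 0. Then the upper redundancy of Ψ satisfies R_Ψ^+ ≤ R_Φ^+·(1 + μ/√(R_Φ^+))² = (√(R_Φ^+) + μ)². -/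
open scoped ComplexInnerProductSpace

/-- If `Φ` is a unit-norm frame for a finite-dimensional complex
Hilbert space `H` (`dim H ≥ 1`) and `Ψ` is a unit-norm `μ`-perturbation of `Φ`
with `μ > 0`, then `R_Ψ⁺ ≤ R_Φ⁺ (1 + μ/√(R_Φ⁺))² = (√(R_Φ⁺) + μ)²`. -/
theorem upper_redundancy_of_perturbed_frame
    {H : Type*} [NormedAddCommGroup H] [InnerProductSpace ℂ H] [FiniteDimensional ℂ H]
    (hdim : 1 ≤ Module.finrank ℂ H)
    {N : ℕ} (φ ψ : Fin N → H) (μ : ℝ)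
    (hframe : ∃ A B : ℝ, 0 < A ∧ A ≤ B ∧ ∀ x : H,
      A * ‖x‖ ^ 2 ≤ ∑ i, ‖⟪x, φ i⟫‖ ^ 2 ∧ ∑ i, ‖⟪x, φ i⟫‖ ^ 2 ≤ B * ‖x‖ ^ 2)
    (hφ : ∀ i, ‖φ i‖ = 1) (hψ : ∀ i, ‖ψ i‖ = 1)
    (hμ : 0 < μ)
    (hpert : ∀ c : Fin N → ℂ,
      ‖∑ i, c i • (φ i - ψ i)‖ ≤ μ * Real.sqrt (∑ i, ‖c i‖ ^ 2)) :
    (⨆ x : {x : H // ‖x‖ = 1}, ∑ i, ‖⟪(x : H), ψ i⟫‖ ^ 2) ≤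
      (⨆ x : {x : H // ‖x‖ = 1}, ∑ i, ‖⟪(x : H), φ i⟫‖ ^ 2) *
        (1 + μ / Real.sqrt (⨆ x : {x : H // ‖x‖ = 1}, ∑ i, ‖⟪(x : H), φ i⟫‖ ^ 2)) ^ 2 ∧
    (⨆ x : {x : H // ‖x‖ = 1}, ∑ i, ‖⟪(x : H), φ i⟫‖ ^ 2) *
        (1 + μ / Real.sqrt (⨆ x : {x : H // ‖x‖ = 1}, ∑ i, ‖⟪(x : H), φ i⟫‖ ^ 2)) ^ 2 =
      (Real.sqrt (⨆ x : {x : H // ‖x‖ = 1}, ∑ i, ‖⟪(x : H), φ i⟫‖ ^ 2) + μ) ^ 2 := by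
  obtain ⟨A, B, hA, hAB, hF⟩ := hframe
  have : Nontrivial H := Module.nontrivial_of_finrank_pos (R := ℂ) (by omega)
  obtain ⟨x₀, hx₀⟩ := exists_norm_eq H (zero_le_one (α := ℝ))
  have hne : Nonempty {x : H // ‖x‖ = 1} := ⟨⟨x₀, hx₀⟩⟩
  set S := (⨆ x : {x : H // ‖x‖ = 1}, ∑ i, ‖⟪(x : H), φ i⟫‖ ^ 2) with hSdef
  have hbdd : BddAbove (Set.range fun x : {x : H // ‖x‖ = 1} =>
      ∑ i, ‖⟪(x : H), φ i⟫‖ ^ 2) := by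
    refine ⟨B, ?_⟩
    rintro _ ⟨x, rfl⟩
    have := (hF x).2
    simpa [x.2] using this
  have hSA : A ≤ S := by
    have h1 := le_ciSup hbdd (⟨x₀, hx₀⟩ : {x : H // ‖x‖ = 1})
    have h2 := (hF x₀).1
    simp only [hx₀, one_pow, mul_one] at h2
    exact h2.trans h1
  have hSpos : 0 < S := lt_of_lt_of_le hA hSA
  have hsqS : 0 < Real.sqrt S := Real.sqrt_pos.mpr hSpos
  -- main pointwise bound
  have key : ∀ x : {x : H // ‖x‖ = 1},
      ∑ i, ‖⟪(x : H), ψ i⟫‖ ^ 2 ≤ (Real.sqrt S + μ) ^ 2 := by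
    rintro ⟨x, hx⟩
    set d : Fin N → H := fun i => φ i - ψ i with hd
    set T : ℝ := ∑ i, ‖⟪x, d i⟫‖ ^ 2 with hT
    have hT0 : 0 ≤ T := Finset.sum_nonneg fun i _ => by positivity
    -- T ≤ μ^2
    have hTle : T ≤ μ ^ 2 := by
      set c : Fin N → ℂ := fun i => (starRingEnd ℂ) ⟪x, d i⟫ with hc
      have hcn : ∀ i, ‖c i‖ = ‖⟪x, d i⟫‖ := fun i => RCLike.norm_conj _
      have hinner : ⟪x, ∑ i, c i • d i⟫ = (T : ℂ) := by
        rw [inner_sum]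
        simp only [inner_smul_right, hc, RCLike.conj_mul]
        push_cast [hT]
        norm_num
      have hcs : T ≤ ‖∑ i, c i • d i‖ := by
        have h1 : ‖⟪x, ∑ i, c i • d i⟫‖ ≤ ‖x‖ * ‖∑ i, c i • d i‖ :=
          norm_inner_le_norm _ _
        rw [hinner, hx, one_mul] at h1
        simpa [abs_of_nonneg hT0] using h1
      have hp := hpert c
      have hsum : ∑ i, ‖c i‖ ^ 2 = T := by simp [hcn, hT]
      rw [hsum] at hp
      have hTμ : T ≤ μ * Real.sqrt T := hcs.trans hp
      nlinarith [Real.sq_sqrt hT0, Real.sqrt_nonneg T, hμ.le,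
        mul_le_mul_of_nonneg_left hTμ (le_of_lt hμ)]
    -- ℓ² triangle inequality via EuclideanSpace
    set va : EuclideanSpace ℂ (Fin N) := WithLp.toLp 2 (fun i => ⟪x, φ i⟫) with hva
    set vb : EuclideanSpace ℂ (Fin N) := WithLp.toLp 2 (fun i => ⟪x, ψ i⟫) with hvb
    have hna : ‖va‖ = Real.sqrt (∑ i, ‖⟪x, φ i⟫‖ ^ 2) := EuclideanSpace.norm_eq va
    have hnb : ‖vb‖ = Real.sqrt (∑ i, ‖⟪x, ψ i⟫‖ ^ 2) := EuclideanSpace.norm_eq vb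
    have hnd : ‖va - vb‖ = Real.sqrt T := by
      have : ∀ i, (va - vb) i = ⟪x, d i⟫ := by
        intro i
        simp [hva, hvb, hd, inner_sub_right]
      calc ‖va - vb‖ = Real.sqrt (∑ i, ‖(va - vb) i‖ ^ 2) := EuclideanSpace.norm_eq _
        _ = Real.sqrt T := by rw [hT]; congr 1; exact Finset.sum_congr rfl fun i _ => by rw [this i]
    have htri : ‖vb‖ ≤ ‖va‖ + ‖va - vb‖ := by
      have h := norm_add_le va (vb - va)
      have h2 : ‖vb - va‖ = ‖va - vb‖ := norm_sub_rev _ _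
      simp only [add_sub_cancel] at h
      linarith
    have hSle : ∑ i, ‖⟪x, φ i⟫‖ ^ 2 ≤ S :=
      le_ciSup hbdd (⟨x, hx⟩ : {x : H // ‖x‖ = 1})
    have hbound : ‖vb‖ ≤ Real.sqrt S + μ := by
      have h1 : ‖va‖ ≤ Real.sqrt S := by
        rw [hna]; exact Real.sqrt_le_sqrt hSle
      have h2 : ‖va - vb‖ ≤ μ := by
        rw [hnd]
        have := Real.sqrt_le_sqrt hTle
        simpa [Real.sqrt_sq hμ.le] using this
      linarith
    have : ∑ i, ‖⟪x, ψ i⟫‖ ^ 2 = ‖vb‖ ^ 2 := by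
      rw [hnb, Real.sq_sqrt (Finset.sum_nonneg fun i _ => by positivity)]
    rw [this]
    exact pow_le_pow_left₀ (norm_nonneg _) hbound 2
  have heq : S * (1 + μ / Real.sqrt S) ^ 2 = (Real.sqrt S + μ) ^ 2 := by
    have hS : Real.sqrt S ^ 2 = S := Real.sq_sqrt hSpos.le
    field_simp
    linarith [hS]
  refine ⟨?_, heq⟩
  rw [heq]
  exact ciSup_le key
end

section
/- Let H be a finite-dimensional complex Hilbert space with dim H ≥ 1, let W_1, …, W_N be closed subspaces of H forming a fusion frame for H (weights all 1), and let V_1, …, V_N be closed subspaces of H such that ‖P_{W_i}(x) − P_{V_i}(x)‖ ≤ μ‖x‖ for every x ∈ H and every i, where μ > 0 satisfies √(R_W^−) − μ√N > 0. Then V_1, …, V_N is a fusion frame for H and its lower redundancy satisfies R_V^− ≥ (√(R_W^−) − μ√N)². -/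
private lemma minkowski_aux {N : ℕ} (a b : Fin N → ℝ) :
    Real.sqrt (∑ i, a i ^ 2) - Real.sqrt (∑ i, (a i - b i) ^ 2) ≤ Real.sqrt (∑ i, b i ^ 2) := by
  have h := norm_sub_norm_le ((WithLp.equiv 2 (Fin N → ℝ)).symm a)
    ((WithLp.equiv 2 (Fin N → ℝ)).symm b)
  simp only [EuclideanSpace.norm_eq, WithLp.ofLp_sub, WithLp.equiv_symm_apply, WithLp.ofLp_toLp,
    Real.norm_eq_abs, sq_abs, Pi.sub_apply] at h
  linarith

private lemma proj_real_smul {H : Type*} [NormedAddCommGroup H] [InnerProductSpace ℂ H]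
    [FiniteDimensional ℂ H] (S : Submodule ℂ H) (t : ℝ) (x : H) :
    ((S.orthogonalProjectionOnto (t • x) : H)) = t • (S.orthogonalProjectionOnto x : H) := by
  have : (t : ℂ) • x = t • x := by simp
  rw [← this, map_smul]
  push_cast
  simp

/-- If `W₁, …, W_N` is a fusion frame (weights all 1) for a
finite-dimensional complex Hilbert space `H` (`dim H ≥ 1`), and `V₁, …, V_N` are
closed subspaces with `‖P_{Wᵢ} x - P_{Vᵢ} x‖ ≤ μ‖x‖` for all `x` and `i`, where
`μ > 0` satisfies `√(R_W⁻) - μ√N > 0`, then `V₁, …, V_N` is a fusion frame for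
`H` and `R_V⁻ ≥ (√(R_W⁻) - μ√N)²`. -/
theorem lower_redundancy_of_perturbed_fusion_frame
    {H : Type*} [NormedAddCommGroup H] [InnerProductSpace ℂ H] [FiniteDimensional ℂ H]
    (hdim : 1 ≤ Module.finrank ℂ H)
    {N : ℕ} (W V : Fin N → Submodule ℂ H) (μ : ℝ)
    (hframe : ∃ A B : ℝ, 0 < A ∧ A ≤ B ∧ ∀ x : H,
      A * ‖x‖ ^ 2 ≤ ∑ i, ‖((W i).orthogonalProjectionOnto x : H)‖ ^ 2 ∧
        ∑ i, ‖((W i).orthogonalProjectionOnto x : H)‖ ^ 2 ≤ B * ‖x‖ ^ 2)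
    (hμ : 0 < μ)
    (hμR : 0 < Real.sqrt (⨅ x : {x : H // ‖x‖ = 1},
      ∑ i, ‖((W i).orthogonalProjectionOnto (x : H) : H)‖ ^ 2) - μ * Real.sqrt N)
    (hpert : ∀ i, ∀ x : H,
      ‖((W i).orthogonalProjectionOnto x : H) - ((V i).orthogonalProjectionOnto x : H)‖ ≤ μ * ‖x‖) :
    (∃ A B : ℝ, 0 < A ∧ A ≤ B ∧ ∀ x : H,
      A * ‖x‖ ^ 2 ≤ ∑ i, ‖((V i).orthogonalProjectionOnto x : H)‖ ^ 2 ∧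
        ∑ i, ‖((V i).orthogonalProjectionOnto x : H)‖ ^ 2 ≤ B * ‖x‖ ^ 2) ∧
    (Real.sqrt (⨅ x : {x : H // ‖x‖ = 1},
          ∑ i, ‖((W i).orthogonalProjectionOnto (x : H) : H)‖ ^ 2) - μ * Real.sqrt N) ^ 2 ≤
      ⨅ x : {x : H // ‖x‖ = 1}, ∑ i, ‖((V i).orthogonalProjectionOnto (x : H) : H)‖ ^ 2 := by
  obtain ⟨A₀, B₀, hA₀, hAB₀, hWbd⟩ := hframe
  set R : ℝ := ⨅ x : {x : H // ‖x‖ = 1},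
      ∑ i, ‖((W i).orthogonalProjectionOnto (x : H) : H)‖ ^ 2 with hRdef
  set c : ℝ := Real.sqrt R - μ * Real.sqrt N with hcdef
  have hc : 0 < c := hμR
  -- nontrivial sphere
  have hnt : Nontrivial H := by
    have : 0 < Module.finrank ℂ H := hdim
    exact Module.nontrivial_of_finrank_pos this
  obtain ⟨y₀, hy₀⟩ := exists_norm_eq H one_pos.le
  haveI hne : Nonempty {x : H // ‖x‖ = 1} := ⟨⟨y₀, hy₀⟩⟩
  have hbdW : BddBelow (Set.range fun x : {x : H // ‖x‖ = 1} =>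
      ∑ i, ‖((W i).orthogonalProjectionOnto (x : H) : H)‖ ^ 2) := by
    refine ⟨0, ?_⟩
    rintro r ⟨x, rfl⟩
    positivity
  have hRnn : 0 ≤ R := le_ciInf fun x => by positivity
  -- Minkowski-type key inequalities
  have hdiff : ∀ x : H, Real.sqrt (∑ i,
      (‖((W i).orthogonalProjectionOnto x : H)‖ - ‖((V i).orthogonalProjectionOnto x : H)‖) ^ 2)
      ≤ μ * Real.sqrt N * ‖x‖ := by
    intro x
    have hterm : ∀ i : Fin N,
        (‖((W i).orthogonalProjectionOnto x : H)‖ - ‖((V i).orthogonalProjectionOnto x : H)‖) ^ 2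
        ≤ (μ * ‖x‖) ^ 2 := by
      intro i
      have h1 : |‖((W i).orthogonalProjectionOnto x : H)‖ - ‖((V i).orthogonalProjectionOnto x : H)‖|
          ≤ μ * ‖x‖ := (abs_norm_sub_norm_le _ _).trans (hpert i x)
      calc (‖((W i).orthogonalProjectionOnto x : H)‖ - ‖((V i).orthogonalProjectionOnto x : H)‖) ^ 2
          = |‖((W i).orthogonalProjectionOnto x : H)‖ - ‖((V i).orthogonalProjectionOnto x : H)‖| ^ 2 := by
            rw [sq_abs]
        _ ≤ (μ * ‖x‖) ^ 2 := by
            apply pow_le_pow_left₀ (abs_nonneg _) h1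
    have hsum : ∑ i,
        (‖((W i).orthogonalProjectionOnto x : H)‖ - ‖((V i).orthogonalProjectionOnto x : H)‖) ^ 2
        ≤ (N : ℝ) * (μ * ‖x‖) ^ 2 := by
      calc _ ≤ ∑ _i : Fin N, (μ * ‖x‖) ^ 2 := Finset.sum_le_sum fun i _ => hterm i
        _ = (N : ℝ) * (μ * ‖x‖) ^ 2 := by simp [mul_comm]
    calc Real.sqrt (∑ i,
        (‖((W i).orthogonalProjectionOnto x : H)‖ - ‖((V i).orthogonalProjectionOnto x : H)‖) ^ 2)
        ≤ Real.sqrt ((N : ℝ) * (μ * ‖x‖) ^ 2) := Real.sqrt_le_sqrt hsum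
      _ = Real.sqrt N * (μ * ‖x‖) := by
          rw [Real.sqrt_mul (Nat.cast_nonneg N), Real.sqrt_sq (by positivity)]
      _ = μ * Real.sqrt N * ‖x‖ := by ring
  have keyW : ∀ x : H,
      Real.sqrt (∑ i, ‖((W i).orthogonalProjectionOnto x : H)‖ ^ 2) - μ * Real.sqrt N * ‖x‖
      ≤ Real.sqrt (∑ i, ‖((V i).orthogonalProjectionOnto x : H)‖ ^ 2) := by
    intro x
    have := minkowski_aux (fun i => ‖((W i).orthogonalProjectionOnto x : H)‖)
      (fun i => ‖((V i).orthogonalProjectionOnto x : H)‖)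
    have h2 := hdiff x
    linarith
  have keyV : ∀ x : H,
      Real.sqrt (∑ i, ‖((V i).orthogonalProjectionOnto x : H)‖ ^ 2)
      ≤ Real.sqrt (∑ i, ‖((W i).orthogonalProjectionOnto x : H)‖ ^ 2) + μ * Real.sqrt N * ‖x‖ := by
    intro x
    have h1 := minkowski_aux (fun i => ‖((V i).orthogonalProjectionOnto x : H)‖)
      (fun i => ‖((W i).orthogonalProjectionOnto x : H)‖)
    have h2 := hdiff x
    have h3 : ∑ i, (‖((V i).orthogonalProjectionOnto x : H)‖ - ‖((W i).orthogonalProjectionOnto x : H)‖) ^ 2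
        = ∑ i, (‖((W i).orthogonalProjectionOnto x : H)‖ - ‖((V i).orthogonalProjectionOnto x : H)‖) ^ 2 := by
      apply Finset.sum_congr rfl
      intro i _
      ring
    rw [h3] at h1
    linarith
  -- lower bound on W sums via R
  have hWlow : ∀ x : H, R * ‖x‖ ^ 2 ≤ ∑ i, ‖((W i).orthogonalProjectionOnto x : H)‖ ^ 2 := by
    intro x
    rcases eq_or_ne x 0 with rfl | hx
    · simp
    · have hnx : (0 : ℝ) < ‖x‖ := norm_pos_iff.mpr hx
      set y : H := ‖x‖⁻¹ • x with hydef
      have hy1 : ‖y‖ = 1 := by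
        rw [hydef, norm_smul, norm_inv, norm_norm, inv_mul_cancel₀ hnx.ne']
      have h1 : R ≤ ∑ i, ‖((W i).orthogonalProjectionOnto y : H)‖ ^ 2 :=
        ciInf_le hbdW (⟨y, hy1⟩ : {x : H // ‖x‖ = 1})
      have h2 : ∑ i, ‖((W i).orthogonalProjectionOnto y : H)‖ ^ 2
          = ‖x‖⁻¹ ^ 2 * ∑ i, ‖((W i).orthogonalProjectionOnto x : H)‖ ^ 2 := by
        rw [Finset.mul_sum]
        apply Finset.sum_congr rfl
        intro i _
        rw [hydef, proj_real_smul, norm_smul, norm_inv, norm_norm, mul_pow]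
      rw [h2] at h1
      have := mul_le_mul_of_nonneg_right h1 (le_of_lt (pow_pos hnx 2))
      calc R * ‖x‖ ^ 2 ≤ ‖x‖⁻¹ ^ 2 * (∑ i, ‖((W i).orthogonalProjectionOnto x : H)‖ ^ 2) * ‖x‖ ^ 2 :=
            this
        _ = ∑ i, ‖((W i).orthogonalProjectionOnto x : H)‖ ^ 2 := by
            field_simp
  have hWlow' : ∀ x : H, Real.sqrt R * ‖x‖
      ≤ Real.sqrt (∑ i, ‖((W i).orthogonalProjectionOnto x : H)‖ ^ 2) := by
    intro x
    calc Real.sqrt R * ‖x‖ = Real.sqrt (R * ‖x‖ ^ 2) := by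
          rw [Real.sqrt_mul hRnn, Real.sqrt_sq (norm_nonneg x)]
      _ ≤ _ := Real.sqrt_le_sqrt (hWlow x)
  -- lower bound for V
  have hlow : ∀ x : H, c ^ 2 * ‖x‖ ^ 2 ≤ ∑ i, ‖((V i).orthogonalProjectionOnto x : H)‖ ^ 2 := by
    intro x
    have h1 : c * ‖x‖ ≤ Real.sqrt (∑ i, ‖((V i).orthogonalProjectionOnto x : H)‖ ^ 2) := by
      have := keyW x
      have := hWlow' x
      rw [hcdef]
      nlinarith [norm_nonneg x]
    have h2 : (c * ‖x‖) ^ 2 ≤ Real.sqrt (∑ i, ‖((V i).orthogonalProjectionOnto x : H)‖ ^ 2) ^ 2 :=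
      pow_le_pow_left₀ (by positivity) h1 2
    rw [Real.sq_sqrt (by positivity)] at h2
    calc c ^ 2 * ‖x‖ ^ 2 = (c * ‖x‖) ^ 2 := by ring
      _ ≤ _ := h2
  -- upper bound for V
  have hB₀nn : 0 ≤ B₀ := le_of_lt (lt_of_lt_of_le hA₀ hAB₀)
  have hup : ∀ x : H, ∑ i, ‖((V i).orthogonalProjectionOnto x : H)‖ ^ 2
      ≤ (Real.sqrt B₀ + μ * Real.sqrt N) ^ 2 * ‖x‖ ^ 2 := by
    intro x
    have h1 : Real.sqrt (∑ i, ‖((W i).orthogonalProjectionOnto x : H)‖ ^ 2)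
        ≤ Real.sqrt B₀ * ‖x‖ := by
      calc Real.sqrt (∑ i, ‖((W i).orthogonalProjectionOnto x : H)‖ ^ 2)
          ≤ Real.sqrt (B₀ * ‖x‖ ^ 2) := Real.sqrt_le_sqrt (hWbd x).2
        _ = Real.sqrt B₀ * ‖x‖ := by rw [Real.sqrt_mul hB₀nn, Real.sqrt_sq (norm_nonneg x)]
    have h2 : Real.sqrt (∑ i, ‖((V i).orthogonalProjectionOnto x : H)‖ ^ 2)
        ≤ (Real.sqrt B₀ + μ * Real.sqrt N) * ‖x‖ := by
      have := keyV x
      nlinarith [norm_nonneg x]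
    have h3 : Real.sqrt (∑ i, ‖((V i).orthogonalProjectionOnto x : H)‖ ^ 2) ^ 2
        ≤ ((Real.sqrt B₀ + μ * Real.sqrt N) * ‖x‖) ^ 2 :=
      pow_le_pow_left₀ (Real.sqrt_nonneg _) h2 2
    rw [Real.sq_sqrt (by positivity)] at h3
    calc ∑ i, ‖((V i).orthogonalProjectionOnto x : H)‖ ^ 2
        ≤ ((Real.sqrt B₀ + μ * Real.sqrt N) * ‖x‖) ^ 2 := h3
      _ = (Real.sqrt B₀ + μ * Real.sqrt N) ^ 2 * ‖x‖ ^ 2 := by ring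
  -- A ≤ B
  have hRleB : R ≤ B₀ := by
    have h1 : R ≤ ∑ i, ‖((W i).orthogonalProjectionOnto y₀ : H)‖ ^ 2 :=
      ciInf_le hbdW (⟨y₀, hy₀⟩ : {x : H // ‖x‖ = 1})
    have h2 := (hWbd y₀).2
    rw [hy₀] at h2
    simpa using h1.trans h2
  have hcle : c ≤ Real.sqrt B₀ + μ * Real.sqrt N := by
    have h1 : Real.sqrt R ≤ Real.sqrt B₀ := Real.sqrt_le_sqrt hRleB
    have h2 : 0 ≤ μ * Real.sqrt N := by positivity
    rw [hcdef]
    linarith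
  constructor
  · exact ⟨c ^ 2, (Real.sqrt B₀ + μ * Real.sqrt N) ^ 2, pow_pos hc 2,
      pow_le_pow_left₀ hc.le hcle 2, fun x => ⟨hlow x, hup x⟩⟩
  · refine le_ciInf fun x => ?_
    have := hlow (x : H)
    rw [x.2] at this
    simpa using this
end

section
/- Let H be a finite-dimensional complex Hilbert space with dim H ≥ 1, let W_1, …, W_N be closed subspaces of H forming a fusion frame for H (weights all 1), and let V_1, …, V_N be closed subspaces of H such that ‖P_{W_i}(x) − P_{V_i}(x)‖ ≤ μ‖x‖ for every x ∈ H and every i, where μ > 0. Then the upper redundancy of V = (V_1, …, V_N) satisfies R_V^+ ≤ (√(R_W^+) + μ√N)². -/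
/-- If `W₁, …, W_N` is a fusion frame (weights all 1) for a
finite-dimensional complex Hilbert space `H` (`dim H ≥ 1`), and `V₁, …, V_N` are
closed subspaces with `‖P_{Wᵢ} x - P_{Vᵢ} x‖ ≤ μ‖x‖` for all `x` and `i`, where
`μ > 0`, then `R_V⁺ ≤ (√(R_W⁺) + μ√N)²`. -/
theorem upper_redundancy_of_perturbed_fusion_frame
    {H : Type*} [NormedAddCommGroup H] [InnerProductSpace ℂ H] [FiniteDimensional ℂ H]
    (hdim : 1 ≤ Module.finrank ℂ H)
    {N : ℕ} (W V : Fin N → Submodule ℂ H) (μ : ℝ)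
    (hframe : ∃ A B : ℝ, 0 < A ∧ A ≤ B ∧ ∀ x : H,
      A * ‖x‖ ^ 2 ≤ ∑ i, ‖(Submodule.orthogonalProjectionOnto (W i) x : H)‖ ^ 2 ∧
        ∑ i, ‖(Submodule.orthogonalProjectionOnto (W i) x : H)‖ ^ 2 ≤ B * ‖x‖ ^ 2)
    (hμ : 0 < μ)
    (hpert : ∀ i, ∀ x : H,
      ‖(Submodule.orthogonalProjectionOnto (W i) x : H) - (Submodule.orthogonalProjectionOnto (V i) x : H)‖ ≤ μ * ‖x‖) :
    (⨆ x : {x : H // ‖x‖ = 1}, ∑ i, ‖(Submodule.orthogonalProjectionOnto (V i) (x : H) : H)‖ ^ 2) ≤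
      (Real.sqrt (⨆ x : {x : H // ‖x‖ = 1},
          ∑ i, ‖(Submodule.orthogonalProjectionOnto (W i) (x : H) : H)‖ ^ 2) + μ * Real.sqrt N) ^ 2 := by
  have hnt : Nontrivial H := Module.nontrivial_of_finrank_pos (R := ℂ) (by omega)
  obtain ⟨x₀, hx₀⟩ := exists_norm_eq H (zero_le_one (α := ℝ))
  haveI : Nonempty {x : H // ‖x‖ = 1} := ⟨⟨x₀, hx₀⟩⟩
  -- norm bound for projections
  have hPle : ∀ (K : Submodule ℂ H) (y : H), ‖(Submodule.orthogonalProjectionOnto K y : H)‖ ≤ ‖y‖ := by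
    intro K y
    calc ‖(Submodule.orthogonalProjectionOnto K y : H)‖ = ‖Submodule.orthogonalProjectionOnto K y‖ := by
          rw [Submodule.norm_coe]
      _ ≤ ‖Submodule.orthogonalProjectionOnto K‖ * ‖y‖ := (Submodule.orthogonalProjectionOnto K).le_opNorm y
      _ ≤ 1 * ‖y‖ := by
          exact mul_le_mul_of_nonneg_right (Submodule.orthogonalProjectionOnto_norm_le K) (norm_nonneg y)
      _ = ‖y‖ := one_mul _
  set RW := ⨆ x : {x : H // ‖x‖ = 1}, ∑ i, ‖(Submodule.orthogonalProjectionOnto (W i) (x : H) : H)‖ ^ 2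
    with hRWdef
  have hbdd : BddAbove (Set.range fun x : {x : H // ‖x‖ = 1} =>
      ∑ i, ‖(Submodule.orthogonalProjectionOnto (W i) (x : H) : H)‖ ^ 2) := by
    refine ⟨N, ?_⟩
    rintro _ ⟨x, rfl⟩
    calc ∑ i, ‖(Submodule.orthogonalProjectionOnto (W i) (x : H) : H)‖ ^ 2
        ≤ ∑ _i : Fin N, (1 : ℝ) := by
          refine Finset.sum_le_sum fun i _ => ?_
          have := hPle (W i) (x : H)
          rw [x.2] at this
          nlinarith [norm_nonneg ((Submodule.orthogonalProjectionOnto (W i) (x : H) : H))]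
      _ = N := by simp
  have hRWle : ∀ x : {x : H // ‖x‖ = 1},
      ∑ i, ‖(Submodule.orthogonalProjectionOnto (W i) (x : H) : H)‖ ^ 2 ≤ RW := fun x => le_ciSup hbdd x
  apply ciSup_le
  intro x
  set a : EuclideanSpace ℝ (Fin N) := WithLp.toLp 2 fun i => ‖(Submodule.orthogonalProjectionOnto (W i) (x : H) : H)‖
  set d : EuclideanSpace ℝ (Fin N) :=
    WithLp.toLp 2 fun i => ‖(Submodule.orthogonalProjectionOnto (V i) (x : H) : H) - (Submodule.orthogonalProjectionOnto (W i) (x : H) : H)‖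
  have ha : ‖a‖ ≤ Real.sqrt RW := by
    rw [EuclideanSpace.norm_eq]
    apply Real.sqrt_le_sqrt
    calc ∑ i, ‖a i‖ ^ 2 = ∑ i, ‖(Submodule.orthogonalProjectionOnto (W i) (x : H) : H)‖ ^ 2 := by
          simp [a, Real.norm_eq_abs, sq_abs]
      _ ≤ RW := hRWle x
  have hd : ‖d‖ ≤ μ * Real.sqrt N := by
    rw [EuclideanSpace.norm_eq]
    have : ∑ i, ‖d i‖ ^ 2 ≤ ∑ _i : Fin N, μ ^ 2 := by
      refine Finset.sum_le_sum fun i _ => ?_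
      have h1 : d i ≤ μ := by
        have := hpert i (x : H)
        rw [x.2, mul_one] at this
        simpa [d, norm_sub_rev] using this
      have h0 : (0:ℝ) ≤ d i := norm_nonneg _
      rw [Real.norm_eq_abs, sq_abs]
      nlinarith
    calc Real.sqrt (∑ i, ‖d i‖ ^ 2) ≤ Real.sqrt (∑ _i : Fin N, μ ^ 2) := Real.sqrt_le_sqrt this
      _ = Real.sqrt ((N : ℝ) * μ ^ 2) := by simp [Finset.sum_const, mul_comm]
      _ = μ * Real.sqrt N := by
          rw [Real.sqrt_mul (Nat.cast_nonneg N), Real.sqrt_sq hμ.le, mul_comm]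
  have hsum : ∑ i, ‖(Submodule.orthogonalProjectionOnto (V i) (x : H) : H)‖ ^ 2 ≤ ‖a + d‖ ^ 2 := by
    have hnorm : ‖a + d‖ ^ 2 = ∑ i, ‖a i + d i‖ ^ 2 := by
      rw [EuclideanSpace.norm_eq, Real.sq_sqrt (Finset.sum_nonneg fun i _ => by positivity)]
      rfl
    rw [hnorm]
    refine Finset.sum_le_sum fun i _ => ?_
    have htri : ‖(Submodule.orthogonalProjectionOnto (V i) (x : H) : H)‖ ≤ a i + d i := by
      have : (Submodule.orthogonalProjectionOnto (V i) (x : H) : H) =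
          (Submodule.orthogonalProjectionOnto (W i) (x : H) : H) +
          ((Submodule.orthogonalProjectionOnto (V i) (x : H) : H) - (Submodule.orthogonalProjectionOnto (W i) (x : H) : H)) := by
        abel
      rw [this]
      exact norm_add_le _ _
    have h0 : (0:ℝ) ≤ a i + d i := add_nonneg (norm_nonneg _) (norm_nonneg _)
    calc ‖(Submodule.orthogonalProjectionOnto (V i) (x : H) : H)‖ ^ 2 ≤ (a i + d i) ^ 2 := by
          exact pow_le_pow_left₀ (norm_nonneg _) htri 2
      _ = ‖a i + d i‖ ^ 2 := by rw [Real.norm_eq_abs, sq_abs]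
  calc ∑ i, ‖(Submodule.orthogonalProjectionOnto (V i) (x : H) : H)‖ ^ 2 ≤ ‖a + d‖ ^ 2 := hsum
    _ ≤ (‖a‖ + ‖d‖) ^ 2 := pow_le_pow_left₀ (norm_nonneg _) (norm_add_le a d) 2
    _ ≤ (Real.sqrt RW + μ * Real.sqrt N) ^ 2 := by
        apply pow_le_pow_left₀ (add_nonneg (norm_nonneg _) (norm_nonneg _))
        exact add_le_add ha hd
end

section
/- Let V and W be closed subspaces of a complex Hilbert space H with V ≠ {0}. Then the gap of V to W satisfies δ(V, W) = sin θ(V, W), where cos θ(V, W) = R(V, W); equivalently, sup_{x ∈ V, ‖x‖ = 1} dist(x, W) = (1 − (inf_{x ∈ V, ‖x‖ = 1} ‖P_W(x)‖)²)^{1/2}. -/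
open Real

private lemma g_antitone : Antitone (fun t : ℝ => Real.sqrt (1 - (max t 0) ^ 2)) := by
  intro a b hab
  apply Real.sqrt_le_sqrt
  have h1 : max a 0 ≤ max b 0 := max_le_max hab le_rfl
  have h2 : (0:ℝ) ≤ max a 0 := le_max_right _ _
  nlinarith

private lemma g_continuous : Continuous (fun t : ℝ => Real.sqrt (1 - (max t 0) ^ 2)) := by
  apply Real.continuous_sqrt.comp
  exact continuous_const.sub ((continuous_id.max continuous_const).pow 2)

/-- For closed subspaces `V ≠ {0}` and `W` of a complex Hilbert
space `H`, the gap `δ(V, W) = sup_{x ∈ V, ‖x‖ = 1} dist(x, W)` satisfies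
`δ(V, W) = sin θ(V, W)`, where `cos θ(V, W) = R(V, W) = inf_{x ∈ V, ‖x‖ = 1} ‖P_W x‖`;
that is, `δ(V, W) = (1 - R(V, W)²)^{1/2}`. -/
theorem gap_eq_sin_of_infimum_cosine_angle
    {H : Type*} [NormedAddCommGroup H] [InnerProductSpace ℂ H] [CompleteSpace H]
    (V W : Submodule ℂ H) [W.HasOrthogonalProjection]
    (hV : IsClosed (V : Set H)) (hVne : V ≠ ⊥) :
    (⨆ x : {x : H // x ∈ V ∧ ‖x‖ = 1}, Metric.infDist (x : H) (W : Set H)) =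
      Real.sqrt (1 -
        (⨅ x : {x : H // x ∈ V ∧ ‖x‖ = 1}, ‖(W.orthogonalProjectionOnto (x : H) : H)‖) ^ 2) := by
  set g : ℝ → ℝ := fun t => Real.sqrt (1 - (max t 0) ^ 2) with hg
  -- nonemptiness of the index type
  obtain ⟨v, hvV, hv0⟩ := Submodule.exists_mem_ne_zero_of_ne_bot hVne
  have hvn : ‖v‖ ≠ 0 := norm_ne_zero_iff.mpr hv0
  have : Nonempty {x : H // x ∈ V ∧ ‖x‖ = 1} := by
    refine ⟨⟨‖v‖⁻¹ • v, V.smul_mem _ hvV, ?_⟩⟩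
    rw [norm_smul]
    simp [norm_inv, inv_mul_cancel₀ hvn]
  set f : {x : H // x ∈ V ∧ ‖x‖ = 1} → ℝ :=
    fun x => ‖(W.orthogonalProjectionOnto (x : H) : H)‖ with hf
  have hbdd : BddBelow (Set.range f) := ⟨0, by rintro _ ⟨x, rfl⟩; exact norm_nonneg _⟩
  have hfnn : (0:ℝ) ≤ ⨅ x, f x :=
    le_ciInf fun x => norm_nonneg _
  -- pointwise identity
  have key : ∀ x : {x : H // x ∈ V ∧ ‖x‖ = 1},
      Metric.infDist (x : H) (W : Set H) = g (f x) := by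
    intro x
    have hproj : Metric.infDist (x : H) (W : Set H)
        = ‖(x : H) - W.orthogonalProjectionOnto (x : H)‖ := by
      rw [← Submodule.starProjection_apply, Submodule.starProjection_minimal, Metric.infDist_eq_iInf]
      congr 1
      ext y
      rw [dist_eq_norm]
    have hpyth : ‖(x : H)‖ ^ 2 = ‖(W.orthogonalProjectionOnto (x : H) : H)‖ ^ 2
        + ‖(x : H) - W.orthogonalProjectionOnto (x : H)‖ ^ 2 := by
      rw [← Submodule.starProjection_apply, ← Submodule.starProjection_orthogonal_val (K := W) (x : H)]
      exact Submodule.norm_sq_eq_add_norm_sq_projection (x : H) W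
    have hx1 : ‖(x : H)‖ = 1 := x.2.2
    have hsq : ‖(x : H) - W.orthogonalProjectionOnto (x : H)‖ ^ 2 = 1 - (f x) ^ 2 := by
      rw [hx1] at hpyth; simp [hf] at hpyth ⊢; nlinarith
    rw [hproj, hg]
    simp only
    rw [max_eq_left (norm_nonneg _), ← hsq, Real.sqrt_sq (norm_nonneg _)]
  calc (⨆ x : {x : H // x ∈ V ∧ ‖x‖ = 1}, Metric.infDist (x : H) (W : Set H))
      = ⨆ x, g (f x) := by simp only [key]
    _ = g (⨅ x, f x) :=
        (Antitone.map_ciInf_of_continuousAt (g_continuous.continuousAt) g_antitone hbdd).symm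
    _ = Real.sqrt (1 - (⨅ x, f x) ^ 2) := by rw [hg]; simp only [max_eq_left hfnn]
end
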